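/- Let λ be a real number. If some derivation of the filiform Lie algebra n₄ has characteristic polynomial X(X − 1)(X − λ)², then λ ∈ {−1, 1/2, 1}. -/

import Mathlib

set_option linter.unusedTactic false
set_option linter.unnecessarySeqFocus false
set_option linter.unreachableTactic false

open Polynomial

/-- The 4-dimensional filiform Lie algebra `n₄`: the real vector space `Fin 4 → ℝ` with
basis `e₁, e₂, e₃, e₄` and only nonzero brackets `⁅e₁, e₂⁆ = e₃` and `⁅e₁, e₃⁆ = e₄`. -/
def N4 : Type := Fin 4 → ℝ

noncomputable instance : AddCommGroup N4 := Pi.addCommGroup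
noncomputable instance : Module ℝ N4 := Pi.module _ _ _
instance : FiniteDimensional ℝ N4 := inferInstanceAs (FiniteDimensional ℝ (Fin 4 → ℝ))

lemma N4.add_apply (x y : N4) (i : Fin 4) : (x + y) i = x i + y i := rfl
lemma N4.smul_apply (r : ℝ) (x : N4) (i : Fin 4) : (r • x) i = r * x i := rfl

noncomputable instance : LieRing N4 :=
  { (inferInstance : AddCommGroup N4) with
    bracket := fun x y => ![0, 0, x 0 * y 1 - x 1 * y 0, x 0 * y 2 - x 2 * y 0]
    add_lie := by
      intro x y z
      show (![_,_,_,_] : Fin 4 → ℝ) = ![_,_,_,_] + ![_,_,_,_]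
      funext i
      fin_cases i <;> simp [N4.add_apply] <;> (try erw [N4.add_apply]) <;> simp <;> ring
    lie_add := by
      intro x y z
      show (![_,_,_,_] : Fin 4 → ℝ) = ![_,_,_,_] + ![_,_,_,_]
      funext i
      fin_cases i <;> simp [N4.add_apply] <;> (try erw [N4.add_apply]) <;> simp <;> ring
    lie_self := by
      intro x
      show (![_,_,_,_] : Fin 4 → ℝ) = 0
      funext i
      fin_cases i <;> simp <;> ring
    leibniz_lie := by
      intro x y z
      show (![_,_,_,_] : Fin 4 → ℝ) = ![_,_,_,_] + ![_,_,_,_]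
      funext i
      fin_cases i <;> simp [N4.add_apply] <;> (try erw [N4.add_apply]) <;> simp <;> ring }

noncomputable instance : LieAlgebra ℝ N4 :=
  { lie_smul := by
      intro r x y
      show (![_,_,_,_] : Fin 4 → ℝ) = r • ![_,_,_,_]
      funext i
      fin_cases i <;> simp [N4.smul_apply] <;> (try erw [N4.smul_apply]) <;> simp <;> ring }

noncomputable def bN4 : Module.Basis (Fin 4) ℝ N4 := Pi.basisFun ℝ (Fin 4)

lemma N4.bracket_apply (x y : N4) :
    ⁅x,y⁆ = ![0, 0, x 0 * y 1 - x 1 * y 0, x 0 * y 2 - x 2 * y 0] := rfl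

lemma bN4_repr (x : N4) (i : Fin 4) : bN4.repr x i = x i := rfl

lemma bN4_apply (i j : Fin 4) : bN4 i j = if i = j then 1 else 0 := by
  rw [← bN4_repr (bN4 i) j, Module.Basis.repr_self, Finsupp.single_apply]

section derivation
variable (D : LieDerivation ℝ N4 N4)

lemma h01 : ⁅(bN4 0 : N4), bN4 1⁆ = bN4 2 := by
  funext i; fin_cases i <;> simp [N4.bracket_apply, bN4_apply]

lemma h02 : ⁅(bN4 0 : N4), bN4 2⁆ = bN4 3 := by
  funext i; fin_cases i <;> simp [N4.bracket_apply, bN4_apply]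

lemma h12 : ⁅(bN4 1 : N4), bN4 2⁆ = 0 := by
  funext i; fin_cases i <;> simp [N4.bracket_apply, bN4_apply] <;> rfl

lemma hD2 : D (bN4 2) = ![0, 0, D (bN4 0) 0 + D (bN4 1) 1, D (bN4 1) 2] := by
  have h := D.apply_lie_eq_add (bN4 0) (bN4 1)
  rw [h01] at h
  funext i
  have hi := congrFun h i
  fin_cases i <;>
    simp [N4.bracket_apply, bN4_apply, N4.add_apply] at hi ⊢ <;> erw [N4.add_apply] at hi <;> simp at hi <;> linarith [hi]

lemma hD1 : D (bN4 1) 0 = 0 := by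
  have h := D.apply_lie_eq_add (bN4 1) (bN4 2)
  rw [h12, map_zero] at h
  have hi := congrFun h.symm 3
  have h2 := hD2 D
  erw [N4.add_apply, N4.bracket_apply, N4.bracket_apply] at hi
  simp [N4.bracket_apply, bN4_apply, N4.add_apply, h2] at hi
  exact hi

lemma hD3 : D (bN4 3) = ![0, 0, 0, 2 * D (bN4 0) 0 + D (bN4 1) 1] := by
  have h := D.apply_lie_eq_add (bN4 0) (bN4 2)
  rw [h02] at h
  have h2 := hD2 D
  funext i
  have hi := congrFun h i
  fin_cases i <;>
    · simp only [h2] at hi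
      simp [N4.bracket_apply, bN4_apply, N4.add_apply] at hi ⊢ <;> erw [N4.add_apply, N4.bracket_apply] at hi <;> simp [bN4_apply] at hi <;> linarith [hi]

lemma toMatrix_D :
    LinearMap.toMatrix bN4 bN4 D.toLinearMap =
      !![D (bN4 0) 0, 0, 0, 0;
         D (bN4 0) 1, D (bN4 1) 1, 0, 0;
         D (bN4 0) 2, D (bN4 1) 2, D (bN4 0) 0 + D (bN4 1) 1, 0;
         D (bN4 0) 3, D (bN4 1) 3, D (bN4 1) 2, 2 * D (bN4 0) 0 + D (bN4 1) 1] := by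
  have h1 := hD1 D
  have h2 := hD2 D
  have h3 := hD3 D
  ext i j
  fin_cases j <;> fin_cases i <;>
    simp [LinearMap.toMatrix_apply, bN4_repr, h1, h2, h3] <;> rfl

end derivation

lemma charpoly_lower (a b p q r s t u : ℝ) :
    (!![a, 0, 0, 0;
       p, b, 0, 0;
       q, s, a + b, 0;
       r, t, u, 2 * a + b] : Matrix (Fin 4) (Fin 4) ℝ).charpoly =
      (X - C a) * (X - C b) * (X - C (a + b)) * (X - C (2 * a + b)) := by
  rw [Matrix.charpoly]
  have hc : Matrix.charmatrix (!![a, 0, 0, 0;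
       p, b, 0, 0;
       q, s, a + b, 0;
       r, t, u, 2 * a + b] : Matrix (Fin 4) (Fin 4) ℝ) =
      !![X - C a, 0, 0, 0;
         -C p, X - C b, 0, 0;
         -C q, -C s, X - C (a + b), 0;
         -C r, -C t, -C u, X - C (2 * a + b)] := by
    refine Matrix.ext fun i j => ?_
    fin_cases i <;> fin_cases j <;>
      simp [Matrix.charmatrix_apply, Matrix.diagonal_apply]
  rw [hc]
  simp [Matrix.det_succ_row_zero, Fin.sum_univ_succ]
  ring

lemma key (a b lam : ℝ)
    (hv : ∀ t : ℝ, (t - a) * (t - b) * (t - (a + b)) * (t - (2 * a + b)) =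
      t * (t - 1) * (t - lam) ^ 2) :
    lam = -1 ∨ lam = 1 / 2 ∨ lam = 1 := by
  have E4 : a * b * (a + b) * (2 * a + b) = 0 := by linear_combination hv 0
  have E1 : 4 * a + 3 * b = 1 + 2 * lam := by
    linear_combination (1/2) * hv 1 + (1/6) * hv (-1) - (1/6) * hv 2 - (1/2) * hv 0
  have E2 : 5 * a ^ 2 + 9 * a * b + 3 * b ^ 2 = lam ^ 2 + 2 * lam := by
    linear_combination (1/2) * hv 1 + (1/2) * hv (-1) - hv 0
  have E3 : 2 * a ^ 3 + 8 * a ^ 2 * b + 6 * a * b ^ 2 + b ^ 3 = lam ^ 2 := by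
    linear_combination (-1) * hv 1 + (1/3) * hv (-1) + (1/6) * hv 2 + (1/2) * hv 0
  clear hv
  rcases mul_eq_zero.mp E4 with h | hz
  · rcases mul_eq_zero.mp h with h' | hz
    · rcases mul_eq_zero.mp h' with hz | hz
      · -- a = 0, conclude lam = 1
        subst hz
        have hb : b = (1 + 2 * lam) / 3 := by linarith
        subst hb
        right; right
        have hsq : (lam - 1) ^ 2 = 0 := by linear_combination 3 * E2
        have := pow_eq_zero_iff (n := 2) (by norm_num) |>.mp hsq
        linarith
      · -- b = 0, conclude lam = 1/2
        subst hz
        have ha : a = (1 + 2 * lam) / 4 := by linarith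
        subst ha
        have hfac : (2 * lam - 1) * (2 * lam - 5) = 0 := by linear_combination 16 * E2
        rcases mul_eq_zero.mp hfac with h1 | h5
        · right; left; linarith
        · exfalso
          have hl : lam = 5 / 2 := by linarith
          rw [hl] at E3
          norm_num at E3
    · -- a + b = 0, conclude lam = -1
      have hb : b = -a := by linarith
      subst hb
      have ha : a = 1 + 2 * lam := by linarith
      subst ha
      have hfac : (lam + 1) * (5 * lam + 1) = 0 := by linear_combination (-1) * E2
      rcases mul_eq_zero.mp hfac with h1 | h5
      · left; linarith
      · exfalso
        have hl : lam = -1 / 5 := by linarith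
        rw [hl] at E3
        norm_num at E3
  · -- 2a + b = 0 : contradiction
    exfalso
    have hb : b = -2 * a := by linarith
    subst hb
    have ha : a = -(1 + 2 * lam) / 2 := by linarith
    subst ha
    have hp : 8 * lam ^ 2 + 12 * lam + 1 = 0 := by linear_combination (-4) * E2
    have hq : 8 * lam ^ 3 + 16 * lam ^ 2 + 6 * lam + 1 = 0 := by
      linear_combination (-4) * E3
    have h0 : (9 : ℝ) / 2 = 0 := by
      linear_combination (4 * lam + 8) * hq - (4 * lam ^ 2 + 10 * lam + 7/2) * hp
    norm_num at h0

/-- If some derivation of the filiform Lie algebra `n₄` has characteristic polynomial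
`X * (X - 1) * (X - λ)²`, then `λ ∈ {-1, 1/2, 1}`. -/
theorem charpoly_derivation_n4_r4_lambda (lam : ℝ)
    (h : ∃ D : LieDerivation ℝ N4 N4,
      LinearMap.charpoly D.toLinearMap = X * (X - 1) * (X - C lam) ^ 2) :
    lam = -1 ∨ lam = 1 / 2 ∨ lam = 1 := by
  obtain ⟨D, hD⟩ := h
  rw [← LinearMap.charpoly_toMatrix D.toLinearMap bN4, toMatrix_D D, charpoly_lower] at hD
  apply key (D (bN4 0) 0) (D (bN4 1) 1) lam
  intro t
  have ht := congrArg (Polynomial.eval t) hD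
  simp only [Polynomial.eval_mul, Polynomial.eval_sub, Polynomial.eval_pow,
    Polynomial.eval_X, Polynomial.eval_C, Polynomial.eval_one] at ht
  linear_combination ht
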